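/- arXiv:2306.04816 — 2 statements merged into one kernel-verified Lean document; each statement's English description precedes it below -/
import Mathlib

section
/- Let R be a ring. If 0 → W → X → Y → 0 is a degreewise pure short exact sequence of chain complexes and two of the three complexes are K-flat, then so is the third. -/
/-!
Setup: we work with cochain complexes of modules over a commutative ring,
with the monoidal (total tensor product) structure on complexes.
-/

open CategoryTheory MonoidalCategory Limits HomologicalComplex

noncomputable section

variable (R : Type) [CommRing R]

/-- Tensoring on the right preserves colimits in `ModuleCat R`. -/
instance (Z : ModuleCat R) : PreservesColimits (tensorRight Z) :=
  preservesColimits_of_natIso (F := tensorLeft Z)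
    (NatIso.ofComponents (fun X => β_ Z X) (by intros; simp))

instance : (curriedTensor (ModuleCat R)).Additive where
  map_add := by intros; ext; simp [curriedTensor]

instance (X : ModuleCat R) : ((curriedTensor (ModuleCat R)).obj X).Additive where
  map_add := by intros; simp [curriedTensor]

instance (X₁ X₂ X₃ : GradedObject ℤ (ModuleCat R)) :
    GradedObject.HasGoodTensor₁₂Tensor X₁ X₂ X₃ :=
  fun _ _ => inferInstanceAs (PreservesColimit _ (tensorRight _))

instance (X₁ X₂ X₃ : GradedObject ℤ (ModuleCat R)) :
    GradedObject.HasGoodTensorTensor₂₃ X₁ X₂ X₃ :=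
  fun _ _ => inferInstanceAs (PreservesColimit _ (tensorLeft _))

instance (X₁ X₂ X₃ X₄ : GradedObject ℤ (ModuleCat R)) :
    GradedObject.HasTensor₄ObjExt X₁ X₂ X₃ X₄ :=
  fun _ _ => inferInstanceAs (PreservesColimit _ (tensorLeft _))

instance (X : ModuleCat R) :
    PreservesColimit (Functor.empty.{0} (ModuleCat R)) ((curriedTensor (ModuleCat R)).obj X) :=
  inferInstanceAs (PreservesColimit _ (tensorLeft _))

instance (X : ModuleCat R) :
    PreservesColimit (Functor.empty.{0} (ModuleCat R)) ((curriedTensor (ModuleCat R)).flip.obj X) :=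
  inferInstanceAs (PreservesColimit _ (tensorRight _))

/-- The category of (cochain) complexes of `R`-modules, with its tensor product. -/
abbrev Kx := CochainComplex (ModuleCat R) ℤ

variable {R}

/-- A complex is acyclic (exact) if its homology vanishes in every degree. -/
def IsAcyclic (X : Kx R) : Prop := ∀ n : ℤ, X.ExactAt n

/-- A complex `X` is K-flat if `E ⊗ X` is acyclic for every acyclic complex `E`. -/
def IsKFlat (X : Kx R) : Prop :=
  ∀ E : Kx R, IsAcyclic E → IsAcyclic (E ⊗ X)

section Aux

open DirectSum

lemma sigma_map_zero {α : Type} (T : α → ShortComplex (ModuleCat R)) :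
    Limits.Sigma.map (f := fun a => (T a).X₁) (g := fun a => (T a).X₂) (fun a => (T a).f) ≫
      Limits.Sigma.map (f := fun a => (T a).X₂) (g := fun a => (T a).X₃) (fun a => (T a).g) = 0 := by
  apply colimit.hom_ext
  rintro ⟨a⟩
  simp [(T a).zero]

/-- A coproduct of short exact sequences of modules is short exact. -/
lemma sigma_map_shortExact {α : Type} (T : α → ShortComplex (ModuleCat R))
    (hT : ∀ a, (T a).ShortExact) :
    (ShortComplex.mk
      (Limits.Sigma.map (f := fun a => (T a).X₁) (g := fun a => (T a).X₂) (fun a => (T a).f))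
      (Limits.Sigma.map (f := fun a => (T a).X₂) (g := fun a => (T a).X₃) (fun a => (T a).g))
      (sigma_map_zero T)).ShortExact := by
  classical
  have inj : ∀ a, Function.Injective ((T a).f) :=
    fun a => (ModuleCat.mono_iff_injective _).1 (hT a).mono_f
  have surj : ∀ a, Function.Surjective ((T a).g) :=
    fun a => (ModuleCat.epi_iff_surjective _).1 (hT a).epi_g
  have hex : ∀ a, ∀ x : (T a).X₂, (T a).g x = 0 → ∃ y, (T a).f y = x :=
    fun a => (ShortComplex.moduleCat_exact_iff _).1 (hT a).exact
  let F' : (⨁ a, (T a).X₁) →ₗ[R] (⨁ a, (T a).X₂) :=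
    DFinsupp.mapRange.linearMap (fun a => (T a).f.hom)
  let G' : (⨁ a, (T a).X₂) →ₗ[R] (⨁ a, (T a).X₃) :=
    DFinsupp.mapRange.linearMap (fun a => (T a).g.hom)
  let F : ModuleCat.of R (⨁ a, (T a).X₁) ⟶ ModuleCat.of R (⨁ a, (T a).X₂) := ModuleCat.ofHom F'
  let G : ModuleCat.of R (⨁ a, (T a).X₂) ⟶ ModuleCat.of R (⨁ a, (T a).X₃) := ModuleCat.ofHom G'
  have hF : ∀ (x : (⨁ a, (T a).X₁)) (a : α), F' x a = (T a).f (x a) := by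
    intro x a
    exact DFinsupp.mapRange_apply _ (fun i => map_zero _) x a
  have hG : ∀ (x : (⨁ a, (T a).X₂)) (a : α), G' x a = (T a).g (x a) := by
    intro x a
    exact DFinsupp.mapRange_apply _ (fun i => map_zero _) x a
  have lofF : ∀ (a : α) (m : (T a).X₁),
      F' (DirectSum.lof R α (fun b => (T b).X₁) a m)
        = DirectSum.lof R α (fun b => (T b).X₂) a ((T a).f m) := by
    intro a m
    refine DFinsupp.ext (fun b => ?_)
    rw [hF]
    by_cases h : b = a
    · subst h; simp [DirectSum.lof_eq_of, DirectSum.of_eq_same]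
    · simp [DirectSum.lof_eq_of, DirectSum.of_eq_of_ne _ _ _ h]
  have lofG : ∀ (a : α) (m : (T a).X₂),
      G' (DirectSum.lof R α (fun b => (T b).X₂) a m)
        = DirectSum.lof R α (fun b => (T b).X₃) a ((T a).g m) := by
    intro a m
    refine DFinsupp.ext (fun b => ?_)
    rw [hG]
    by_cases h : b = a
    · subst h; simp [DirectSum.lof_eq_of, DirectSum.of_eq_same]
    · simp [DirectSum.lof_eq_of, DirectSum.of_eq_of_ne _ _ _ h]
  have hFG : F ≫ G = 0 := by
    refine ModuleCat.hom_ext (LinearMap.ext (fun x => ?_))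
    let x₁ : (⨁ a, (T a).X₁) := x
    show G' (F' x₁) = 0
    refine DFinsupp.ext (fun a => ?_)
    have h0 : (T a).g ((T a).f (x₁ a)) = 0 := by
      have := congrArg (fun φ : (T a).X₁ ⟶ (T a).X₃ => φ (x₁ a)) (T a).zero
      simpa using this
    rw [hG, hF, h0]
    simp
  have hSE : (ShortComplex.mk F G hFG).ShortExact := by
    refine { exact := ?_, mono_f := ?_, epi_g := ?_ }
    · refine (ShortComplex.moduleCat_exact_iff _).2 ?_
      intro x hx
      let x₂ : (⨁ a, (T a).X₂) := x
      have hgx : G' x₂ = 0 := hx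
      have hx' : ∀ a, (T a).g (x₂ a) = 0 := by
        intro a
        rw [← hG, hgx]
        simp
      choose pre hpre using fun a => hex a (x₂ a) (hx' a)
      refine ⟨DFinsupp.mk x₂.support (fun a => pre a.1), ?_⟩
      show F' (DFinsupp.mk x₂.support (fun a => pre a.1)) = x₂
      refine DFinsupp.ext (fun a => ?_)
      rw [hF]
      by_cases h : a ∈ x₂.support
      · rw [DFinsupp.mk_apply, dif_pos h, hpre]
      · rw [DFinsupp.mk_apply, dif_neg h, map_zero]
        exact ((DFinsupp.notMem_support_iff).1 h).symm
    · rw [ModuleCat.mono_iff_injective]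
      show Function.Injective F'
      intro x y hxy
      refine DFinsupp.ext (fun a => ?_)
      apply inj a
      rw [← hF, ← hF, hxy]
    · rw [ModuleCat.epi_iff_surjective]
      show Function.Surjective G'
      intro y
      choose pre hpre using fun a => surj a (y a)
      refine ⟨DFinsupp.mk y.support (fun a => pre a.1), ?_⟩
      refine DFinsupp.ext (fun a => ?_)
      rw [hG]
      by_cases h : a ∈ y.support
      · rw [DFinsupp.mk_apply, dif_pos h, hpre]
      · rw [DFinsupp.mk_apply, dif_neg h, map_zero]
        exact ((DFinsupp.notMem_support_iff).1 h).symm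
  refine ShortComplex.shortExact_of_iso (ShortComplex.isoMk (ModuleCat.coprodIsoDirectSum _)
    (ModuleCat.coprodIsoDirectSum _) (ModuleCat.coprodIsoDirectSum _) ?_ ?_).symm hSE
  · apply colimit.hom_ext
    rintro ⟨a⟩
    rw [← Category.assoc, ModuleCat.ι_coprodIsoDirectSum_hom, ← Category.assoc]
    erw [ι_colimMap]
    rw [Category.assoc, ModuleCat.ι_coprodIsoDirectSum_hom]
    refine ModuleCat.hom_ext (LinearMap.ext (fun m => ?_))
    exact lofF a m
  · apply colimit.hom_ext
    rintro ⟨a⟩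
    rw [← Category.assoc, ModuleCat.ι_coprodIsoDirectSum_hom, ← Category.assoc]
    erw [ι_colimMap]
    rw [Category.assoc, ModuleCat.ι_coprodIsoDirectSum_hom]
    refine ModuleCat.hom_ext (LinearMap.ext (fun m => ?_))
    exact lofG a m

end Aux

section Aux2

variable {R : Type} [CommRing R]

/-- The index set for degree `n` of the tensor product of cochain complexes. -/
abbrev TIdx (n : ℤ) : Type :=
  (ComplexShape.π (ComplexShape.up ℤ) (ComplexShape.up ℤ) (ComplexShape.up ℤ)) ⁻¹' {n}

/-- Degree `n` of a tensor product of complexes is the coproduct of the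
`E.X i ⊗ M.X j` with `i + j = n`. -/
noncomputable def degIso (E M : Kx R) (n : ℤ) :
    (∐ (fun (a : TIdx n) => (E.X a.1.1 ⊗ M.X a.1.2 : ModuleCat R))) ≅ (E ⊗ M).X n where
  hom := Sigma.desc (fun a => HomologicalComplex.ιTensorObj E M a.1.1 a.1.2 n a.2)
  inv := HomologicalComplex.mapBifunctorDesc (fun i₁ i₂ h => Sigma.ι
    (fun (a : TIdx n) => (E.X a.1.1 ⊗ M.X a.1.2 : ModuleCat R)) ⟨(i₁, i₂), h⟩)
  hom_inv_id := by
    apply colimit.hom_ext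
    rintro ⟨a⟩
    simp [HomologicalComplex.ιTensorObj, HomologicalComplex.ι_mapBifunctorDesc]
    erw [HomologicalComplex.ι_mapBifunctorDesc]
  inv_hom_id := by
    apply HomologicalComplex.mapBifunctor.hom_ext
    intro i₁ i₂ h
    simp
    rfl

lemma degMap (E : Kx R) {M N : Kx R} (φ : M ⟶ N) (n : ℤ) :
    (degIso E M n).hom ≫ (E ◁ φ).f n =
      Limits.Sigma.map (f := fun (a : TIdx n) => (E.X a.1.1 ⊗ M.X a.1.2 : ModuleCat R))
        (g := fun (a : TIdx n) => (E.X a.1.1 ⊗ N.X a.1.2 : ModuleCat R))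
        (fun a => E.X a.1.1 ◁ φ.f a.1.2) ≫ (degIso E N n).hom := by
  apply colimit.hom_ext
  rintro ⟨a⟩
  rw [show (E ◁ φ) = HomologicalComplex.mapBifunctorMap (𝟙 E) φ (curriedTensor (ModuleCat R))
    (ComplexShape.up ℤ) from rfl]
  simp [degIso, HomologicalComplex.ιTensorObj, HomologicalComplex.ι_mapBifunctorMap]
  erw [HomologicalComplex.ι_mapBifunctorMap]
  simp

end Aux2


section Aux3

variable {R : Type} [CommRing R]

lemma whiskerLeft_zero' (E : Kx R) {M N : Kx R} : (E ◁ (0 : M ⟶ N)) = 0 := by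
  ext n : 1
  apply HomologicalComplex.mapBifunctor.hom_ext
  intro i₁ i₂ h
  rw [show (E ◁ (0 : M ⟶ N)) = HomologicalComplex.mapBifunctorMap (𝟙 E) 0
    (curriedTensor (ModuleCat R)) (ComplexShape.up ℤ) from rfl]
  simp [HomologicalComplex.ι_mapBifunctorMap, HomologicalComplex.zero_f]

lemma whiskerLeft_comp_zero (E : Kx R) (S : ShortComplex (Kx R)) :
    (E ◁ S.f) ≫ (E ◁ S.g) = 0 := by
  rw [← MonoidalCategory.whiskerLeft_comp, S.zero, whiskerLeft_zero']

lemma comp_f_zero (S : ShortComplex (Kx R)) (j : ℤ) : S.f.f j ≫ S.g.f j = 0 := by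
  rw [← HomologicalComplex.comp_f, S.zero, HomologicalComplex.zero_f]

lemma wl_comp_f_zero (E : Kx R) (S : ShortComplex (Kx R)) (i j : ℤ) :
    (E.X i ◁ S.f.f j) ≫ (E.X i ◁ S.g.f j) = 0 := by
  rw [← MonoidalCategory.whiskerLeft_comp, comp_f_zero]
  simp

/-- Tensoring a degreewise pure short exact sequence of complexes with a complex `E`
yields a (degreewise) short exact sequence of complexes. -/
lemma whiskerLeft_shortExact (S : ShortComplex (Kx R)) (hS : S.ShortExact)
    (hpure : ∀ (n : ℤ) (M : ModuleCat R), Mono (M ◁ S.f.f n)) (E : Kx R) :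
    (ShortComplex.mk (E ◁ S.f) (E ◁ S.g) (whiskerLeft_comp_zero E S)).ShortExact := by
  rw [HomologicalComplex.shortExact_iff_degreewise_shortExact]
  intro n
  have hdeg := (HomologicalComplex.shortExact_iff_degreewise_shortExact S).1 hS
  have hT : ∀ a : TIdx n, (ShortComplex.mk (E.X a.1.1 ◁ S.f.f a.1.2)
      (E.X a.1.1 ◁ S.g.f a.1.2) (wl_comp_f_zero E S a.1.1 a.1.2)).ShortExact := by
    intro a
    have hg : Function.Surjective (S.g.f a.1.2) :=
      (ModuleCat.epi_iff_surjective _).1 (hdeg a.1.2).epi_g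
    refine { exact := ?_, mono_f := hpure a.1.2 (E.X a.1.1), epi_g := ?_ }
    · have hf : Function.Exact (S.f.f a.1.2) (S.g.f a.1.2) := LinearMap.exact_iff.2
        (((ShortComplex.moduleCat_exact_iff_range_eq_ker _).1 (hdeg a.1.2).exact).symm)
      have hlt := lTensor_exact (E.X a.1.1) hf hg
      refine (ShortComplex.moduleCat_exact_iff _).2 (fun x hx => ?_)
      exact (hlt x).1 hx
    · exact (ModuleCat.epi_iff_surjective _).2
        (LinearMap.lTensor_surjective _ hg)
  exact ShortComplex.shortExact_of_iso
    (ShortComplex.isoMk (degIso E S.X₁ n) (degIso E S.X₂ n) (degIso E S.X₃ n)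
      (degMap E S.f n) (degMap E S.g n))
    (sigma_map_shortExact _ hT)

/-- The long exact homology sequence: two out of three complexes acyclic implies the
third is acyclic. -/
lemma acyclic_two_of_three (T : ShortComplex (Kx R)) (hT : T.ShortExact) :
    (IsAcyclic T.X₁ → IsAcyclic T.X₂ → IsAcyclic T.X₃) ∧
    (IsAcyclic T.X₁ → IsAcyclic T.X₃ → IsAcyclic T.X₂) ∧
    (IsAcyclic T.X₂ → IsAcyclic T.X₃ → IsAcyclic T.X₁) := by
  have hiz : ∀ (K : Kx R), IsAcyclic K ↔ ∀ n, Limits.IsZero (K.homology n) := fun K =>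
    forall_congr' (fun n => K.exactAt_iff_isZero_homology n)
  refine ⟨?_, ?_, ?_⟩
  · intro h1 h2
    rw [hiz] at h1 h2 ⊢
    intro n
    refine (hT.homology_exact₃ n (n+1) rfl).isZero_X₂ ?_ ?_
    · exact (h2 n).eq_of_src _ _
    · exact (h1 (n+1)).eq_of_tgt _ _
  · intro h1 h3
    rw [hiz] at h1 h3 ⊢
    intro n
    refine (hT.homology_exact₂ n).isZero_X₂ ?_ ?_
    · exact (h1 n).eq_of_src _ _
    · exact (h3 n).eq_of_tgt _ _
  · intro h2 h3
    rw [hiz] at h2 h3 ⊢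
    intro n
    refine (hT.homology_exact₁ (n-1) n (by rw [ComplexShape.up_Rel]; omega)).isZero_X₂ ?_ ?_
    · exact (h3 (n-1)).eq_of_src _ _
    · exact (h2 n).eq_of_tgt _ _

end Aux3

/-- If `0 → W → X → Y → 0` is a degreewise pure short exact sequence of
complexes of `R`-modules and two of the three complexes are K-flat, then so is the
third. -/
theorem kflat_two_out_of_three
    (S : ShortComplex (Kx R)) (hS : S.ShortExact)
    (hpure : ∀ (n : ℤ) (M : ModuleCat R), Mono (M ◁ S.f.f n)) :
    (IsKFlat S.X₁ → IsKFlat S.X₂ → IsKFlat S.X₃) ∧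
    (IsKFlat S.X₁ → IsKFlat S.X₃ → IsKFlat S.X₂) ∧
    (IsKFlat S.X₂ → IsKFlat S.X₃ → IsKFlat S.X₁) := by
  have key : ∀ E : Kx R,
      (ShortComplex.mk (E ◁ S.f) (E ◁ S.g) (whiskerLeft_comp_zero E S)).ShortExact :=
    fun E => whiskerLeft_shortExact S hS hpure E
  refine ⟨fun h1 h2 E hE => ?_, fun h1 h3 E hE => ?_, fun h2 h3 E hE => ?_⟩
  · exact (acyclic_two_of_three _ (key E)).1 (h1 E hE) (h2 E hE)
  · exact (acyclic_two_of_three _ (key E)).2.1 (h1 E hE) (h3 E hE)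
  · exact (acyclic_two_of_three _ (key E)).2.2 (h2 E hE) (h3 E hE)
end
end

section
/- Let R be a ring and let E be a chain complex of R-modules with pure injective components such that every chain map X → E from a K-flat complex X is null homotopic and Ext^1 along degreewise pure exact sequences from every K-flat complex into E vanishes. Then E is acyclic. -/
/-!
Setup: we work with cochain complexes of modules over a commutative ring,
with the monoidal (total tensor product) structure on complexes.
-/

open CategoryTheory MonoidalCategory Limits HomologicalComplex

noncomputable section

variable (R : Type) [CommRing R]

variable {R}

/-- An `R`-module `I` is pure injective if every map into `I` extends along every
pure monomorphism. -/
def PureInjective (I : ModuleCat R) : Prop :=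
  ∀ ⦃A B : ModuleCat R⦄ (f : A ⟶ B), Mono f → (∀ M : ModuleCat R, Mono (M ◁ f)) →
    ∀ g : A ⟶ I, ∃ h : B ⟶ I, f ≫ h = g

section
open CochainComplex

lemma isAcyclic_of_iso {X Y : Kx R} (e : X ≅ Y) (h : IsAcyclic X) : IsAcyclic Y := by
  intro m
  rw [HomologicalComplex.exactAt_iff] at *
  exact ShortComplex.exact_of_iso ((HomologicalComplex.shortComplexFunctor _ _ m).mapIso e)
    (h m)

lemma isAcyclic_shift {A : Kx R} (h : IsAcyclic A) (y : ℤ) : IsAcyclic (A⟦y⟧) := by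
  intro m
  rw [HomologicalComplex.exactAt_iff] at *
  exact ShortComplex.exact_of_iso
    ((CochainComplex.shiftShortComplexFunctorIso (ModuleCat R) y m (y + m) rfl).symm.app A)
    (h (y + m))

lemma isKFlat_unit_shift (y : ℤ) : IsKFlat ((𝟙_ (Kx R))⟦y⟧) := by
  intro A hA
  have e : (A ⊗ ((𝟙_ (Kx R))⟦y⟧)) ≅ (A ⊗ (𝟙_ (Kx R)))⟦y⟧ :=
    CochainComplex.mapBifunctorShift₂Iso A _ (curriedTensor (ModuleCat R)) y
  exact isAcyclic_of_iso e.symm (isAcyclic_shift (isAcyclic_of_iso (ρ_ A).symm hA) y)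
end

/-- Let `E` be a complex of `R`-modules with pure injective components
such that every chain map from a K-flat complex to `E` is null homotopic, and such
that every degreewise pure short exact sequence `0 → E → B → X → 0` with `X` K-flat
splits (vanishing of `Ext¹` in the degreewise pure exact structure).  Then `E` is
acyclic. -/
theorem acyclic_of_rightOrthogonal_to_kflat (E : Kx R)
    (hPI : ∀ n : ℤ, PureInjective (E.X n))
    (hnull : ∀ X : Kx R, IsKFlat X → ∀ f : X ⟶ E, Nonempty (Homotopy f 0))
    (hext : ∀ (B X : Kx R) (i : E ⟶ B) (p : B ⟶ X) (w : i ≫ p = 0),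
      (ShortComplex.mk i p w).ShortExact →
      (∀ (n : ℤ) (M : ModuleCat R), Mono (M ◁ i.f n)) →
      IsKFlat X → ∃ s : X ⟶ B, s ≫ p = 𝟙 X) :
    IsAcyclic E := by
  intro n
  rw [E.exactAt_iff' (n-1) n (n+1) (by simp) (by simp)]
  rw [ShortComplex.moduleCat_exact_iff]
  intro x hx
  dsimp at hx
  set Q : Kx R := (𝟙_ (Kx R))⟦(-n)⟧ with hQ
  have hUd : ∀ i j : ℤ, (𝟙_ (Kx R)).d i j = 0 := fun i j =>
    HomologicalComplex.single_obj_d _ _ _ _ _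
  have hQd : ∀ i j : ℤ, Q.d i j = 0 := fun i j => by
    rw [hQ, CochainComplex.shiftFunctor_obj_d', hUd, smul_zero]; rfl
  let e : (𝟙_ (Kx R)).X (n + -n) ≅ 𝟙_ (ModuleCat R) :=
    (𝟙_ (Kx R)).XIsoOfEq (show n + -n = (0:ℤ) by omega) ≪≫
      HomologicalComplex.singleObjXSelf (ComplexShape.up ℤ) 0 (𝟙_ (ModuleCat R))
  let xh : 𝟙_ (ModuleCat R) ⟶ E.X n := ModuleCat.ofHom (LinearMap.toSpanSingleton R (E.X n) x)
  have hxh : xh ≫ E.d n (n+1) = 0 := by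
    apply ModuleCat.hom_ext
    apply LinearMap.ext_ring
    show E.d n (n+1) (xh 1) = 0
    have : xh (1 : R) = x := LinearMap.toSpanSingleton_apply_one R _ x
    rw [this]; exact hx
  let ff : ∀ m : ℤ, Q.X m ⟶ E.X m := fun m =>
    if h : m = n then
      ((𝟙_ (Kx R)).XIsoOfEq (show m + -n = n + -n by rw [h])).hom ≫ e.hom ≫ xh ≫
        eqToHom (by rw [h])
    else 0
  have ffn : ff n = ((𝟙_ (Kx R)).XIsoOfEq rfl).hom ≫ e.hom ≫ xh ≫ eqToHom rfl := dif_pos rfl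
  have ffm : ∀ m : ℤ, m ≠ n → ff m = 0 := fun m h => dif_neg h
  let f : Q ⟶ E :=
    { f := ff
      comm' := by
        rintro m m' (rfl : m + 1 = m')
        rw [hQd, zero_comp]
        by_cases h : m = n
        · subst h
          rw [ffn]
          simp only [Category.assoc, eqToHom_refl, Category.comp_id]
          refine (Category.assoc _ _ _).trans ?_
          rw [Category.assoc, hxh]
          simp
          exact Category.id_comp _
        · rw [ffm m h, zero_comp] }
  obtain ⟨H⟩ := hnull Q (isKFlat_unit_shift (-n)) f
  have hcomm := H.comm n
  rw [dNext_eq H.hom (show (ComplexShape.up ℤ).Rel n (n+1) by simp),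
    prevD_eq H.hom (show (ComplexShape.up ℤ).Rel (n-1) n by simp)] at hcomm
  rw [hQd, zero_comp, zero_add] at hcomm
  have hfn : ff n = H.hom n (n-1) ≫ E.d (n-1) n := by
    simpa only [HomologicalComplex.zero_f, add_zero] using hcomm
  have hmor : e.inv ≫ ff n = xh := by
    rw [ffn]
    simp
  rw [hfn] at hmor
  refine ⟨H.hom n (n-1) (e.inv 1), ?_⟩
  show E.d (n-1) n (H.hom n (n-1) (e.inv 1)) = x
  calc E.d (n-1) n (H.hom n (n-1) (e.inv 1))
      = (e.inv ≫ H.hom n (n-1) ≫ E.d (n-1) n) (1 : R) := rfl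
    _ = xh 1 := congrArg (fun g => g (1 : R)) hmor
    _ = (show (E.X n : Type) from x) := LinearMap.toSpanSingleton_apply_one R _ x
end
end
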